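/- Let k_1, ..., k_t be positive integers summing to 2K. Construct a 3-candidate weighted Borda election with candidates {p, a, b}, registered manipulators of weights k_1, ..., k_t, two unregistered voters each of weight 3K−1 voting p > a > b and p > b > a respectively, and addition limit 1. Then there is a subsequence of k_1, ..., k_t summing to K if and only if the manipulators can cast votes such that no choice of at most one unregistered voter to add makes p a winner. -/

import Mathlib

/-- The three candidates of a 3-candidate election. -/
inductive Cand : Type
  | p | a | b
deriving DecidableEq

instance : Fintype Cand where
  elems := {Cand.p, Cand.a, Cand.b}
  complete := by intro x; cases x <;> simp

/-- Borda points (for weight 1) that the ballot `f` (a ranking: `f c = 0` means top)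
gives to candidate `c`: `2` for the top, `1` for the middle, `0` for the bottom. -/
def pts (f : Cand → Fin 3) (c : Cand) : ℕ := 2 - (f c : ℕ)

/-- The ballot `p > a > b`. -/
def ballotPAB : Cand → Fin 3 := fun c => match c with | .p => 0 | .a => 1 | .b => 2

/-- The ballot `p > b > a`. -/
def ballotPBA : Cand → Fin 3 := fun c => match c with | .p => 0 | .b => 1 | .a => 2

/-- The ballot `a > b > p`. -/
def fABP : Cand → Fin 3 := fun c => match c with | .a => 0 | .b => 1 | .p => 2

/-- The ballot `b > a > p`. -/
def fBAP : Cand → Fin 3 := fun c => match c with | .b => 0 | .a => 1 | .p => 2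

lemma pts_le (f : Cand → Fin 3) (c : Cand) : pts f c ≤ 2 := Nat.sub_le 2 _

lemma pts_sum (f : Cand → Fin 3) (hf : Function.Injective f) :
    pts f Cand.p + pts f Cand.a + pts f Cand.b = 3 := by
  have hpa := hf.ne (show Cand.p ≠ Cand.a by decide)
  have hpb := hf.ne (show Cand.p ≠ Cand.b by decide)
  have hab := hf.ne (show Cand.a ≠ Cand.b by decide)
  simp only [Ne, Fin.ext_iff] at hpa hpb hab
  have h1 := (f Cand.p).isLt
  have h2 := (f Cand.a).isLt
  have h3 := (f Cand.b).isLt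
  unfold pts
  omega

/-- For positive weights `k 1, …, k t` summing to `2K`, with registered manipulators of
those weights, two unregistered voters of weight `3K-1` voting `p > a > b` and
`p > b > a`, and addition limit one: some subsequence of the weights sums to `K`
iff the manipulators can vote so that no choice of at most one unregistered voter to
add makes `p` a winner of the weighted Borda election. -/
theorem stmt4 (t K : ℕ) (hK : 0 < K) (k : Fin t → ℕ) (hpos : ∀ i, 0 < k i)
    (hsum : ∑ i, k i = 2 * K) :
    (∃ S : Finset (Fin t), ∑ i ∈ S, k i = K) ↔
    ∃ r : Fin t → Cand → Fin 3, (∀ i, Function.Injective (r i)) ∧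
      (¬ (∀ c : Cand, (∑ i, k i * pts (r i) c) ≤ ∑ i, k i * pts (r i) Cand.p)) ∧
      (¬ (∀ c : Cand,
            (∑ i, k i * pts (r i) c) + (3 * K - 1) * pts ballotPAB c ≤
            (∑ i, k i * pts (r i) Cand.p) + (3 * K - 1) * pts ballotPAB Cand.p)) ∧
      (¬ (∀ c : Cand,
            (∑ i, k i * pts (r i) c) + (3 * K - 1) * pts ballotPBA c ≤
            (∑ i, k i * pts (r i) Cand.p) + (3 * K - 1) * pts ballotPBA Cand.p)) := by
  constructor
  · rintro ⟨S, hS⟩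
    refine ⟨fun i => if i ∈ S then fABP else fBAP, ?_, ?_, ?_, ?_⟩
    · intro i
      by_cases h : i ∈ S <;> simp only [h, if_true, if_false] <;> decide
    all_goals {
      have hSp : (∑ i, k i * pts (if i ∈ S then fABP else fBAP) Cand.p) = 0 := by
        apply Finset.sum_eq_zero
        intro i _
        by_cases h : i ∈ S <;> simp [h, pts, fABP, fBAP]
      have hSa : (∑ i, k i * pts (if i ∈ S then fABP else fBAP) Cand.a) = 3 * K := by
        have : ∀ i ∈ Finset.univ, k i * pts (if i ∈ S then fABP else fBAP) Cand.a
            = k i + (if i ∈ S then k i else 0) := by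
          intro i _
          by_cases h : i ∈ S <;> simp [h, pts, fABP, fBAP] <;> ring
        rw [Finset.sum_congr rfl this, Finset.sum_add_distrib, hsum,
          Finset.sum_ite_mem, Finset.univ_inter, hS]
        ring
      have hSb : (∑ i, k i * pts (if i ∈ S then fABP else fBAP) Cand.b) = 3 * K := by
        have : ∀ i ∈ Finset.univ, k i * pts (if i ∈ S then fABP else fBAP) Cand.b
            = k i + (if i ∈ S then 0 else k i) := by
          intro i _
          by_cases h : i ∈ S <;> simp [h, pts, fABP, fBAP] <;> ring
        have h2 : (∑ i, if i ∈ S then 0 else k i) = 2 * K - K := by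
          have := Finset.sum_filter_add_sum_filter_not Finset.univ (fun i => i ∈ S) k
          have hfil : (∑ i ∈ Finset.univ.filter (fun i => i ∈ S), k i) = K := by
            rw [show Finset.univ.filter (fun i => i ∈ S) = S by
              ext x; simp]
            exact hS
          have hcongr : ∀ i ∈ Finset.univ,
              (if i ∈ S then 0 else k i) = (if i ∉ S then k i else 0) := by
            intro i _; by_cases h : i ∈ S <;> simp [h]
          rw [Finset.sum_congr rfl hcongr, ← Finset.sum_filter]
          omega
        rw [Finset.sum_congr rfl this, Finset.sum_add_distrib, hsum, h2]
        omega
      intro h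
      first
      | (have := h Cand.a
         rw [hSa, hSp] at this
         try simp only [show pts ballotPAB Cand.a = 1 from rfl,
           show pts ballotPAB Cand.p = 2 from rfl] at this
         omega)
      | (have := h Cand.b
         rw [hSb, hSp] at this
         simp only [show pts ballotPBA Cand.b = 1 from rfl,
           show pts ballotPBA Cand.p = 2 from rfl] at this
         omega)
    }
  · rintro ⟨r, hr, _, h3, h4⟩
    push_neg at h3 h4
    set Sp := ∑ i, k i * pts (r i) Cand.p with hSp_def
    set Sa := ∑ i, k i * pts (r i) Cand.a with hSa_def
    set Sb := ∑ i, k i * pts (r i) Cand.b with hSb_def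
    have htot : Sp + Sa + Sb = 6 * K := by
      rw [hSp_def, hSa_def, hSb_def, ← Finset.sum_add_distrib, ← Finset.sum_add_distrib]
      have : ∀ i ∈ Finset.univ, k i * pts (r i) Cand.p + k i * pts (r i) Cand.a
          + k i * pts (r i) Cand.b = 3 * k i := by
        intro i _
        rw [← Nat.mul_add, ← Nat.mul_add, pts_sum (r i) (hr i)]
        ring
      rw [Finset.sum_congr rfl this, ← Finset.mul_sum, hsum]
      ring
    have hSa_le : Sa ≤ 4 * K := by
      calc Sa ≤ ∑ i, k i * 2 := Finset.sum_le_sum (fun i _ =>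
              Nat.mul_le_mul_left _ (pts_le _ _))
        _ = 4 * K := by rw [← Finset.sum_mul, hsum]; ring
    have hSb_le : Sb ≤ 4 * K := by
      calc Sb ≤ ∑ i, k i * 2 := Finset.sum_le_sum (fun i _ =>
              Nat.mul_le_mul_left _ (pts_le _ _))
        _ = 4 * K := by rw [← Finset.sum_mul, hsum]; ring
    -- From the PAB condition: Sa ≥ Sp + 3K
    have hA : Sp + 3 * K ≤ Sa := by
      obtain ⟨c, hc⟩ := h3
      cases c with
      | p => exact absurd hc (lt_irrefl _)
      | a =>
        simp only [show pts ballotPAB Cand.a = 1 from rfl,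
          show pts ballotPAB Cand.p = 2 from rfl] at hc
        omega
      | b =>
        simp only [show pts ballotPAB Cand.b = 0 from rfl,
          show pts ballotPAB Cand.p = 2 from rfl] at hc
        omega
    -- From the PBA condition: Sb ≥ Sp + 3K
    have hB : Sp + 3 * K ≤ Sb := by
      obtain ⟨c, hc⟩ := h4
      cases c with
      | p => exact absurd hc (lt_irrefl _)
      | b =>
        simp only [show pts ballotPBA Cand.b = 1 from rfl,
          show pts ballotPBA Cand.p = 2 from rfl] at hc
        omega
      | a =>
        simp only [show pts ballotPBA Cand.a = 0 from rfl,
          show pts ballotPBA Cand.p = 2 from rfl] at hc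
        omega
    have hSp0 : Sp = 0 := by omega
    have hSa3 : Sa = 3 * K := by omega
    -- every manipulator ranks p last
    have hptsp : ∀ i, pts (r i) Cand.p = 0 := by
      intro i
      have := (Finset.sum_eq_zero_iff.mp hSp0) i (Finset.mem_univ i)
      have hp := hpos i
      rcases Nat.mul_eq_zero.mp this with h | h
      · omega
      · exact h
    have ha12 : ∀ i, pts (r i) Cand.a = 1 ∨ pts (r i) Cand.a = 2 := by
      intro i
      have h1 := pts_sum (r i) (hr i)
      have h2 := pts_le (r i) Cand.a
      have h3 := pts_le (r i) Cand.b
      have h4 := hptsp i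
      omega
    refine ⟨Finset.univ.filter (fun i => pts (r i) Cand.a = 2), ?_⟩
    have key : ∀ i ∈ Finset.univ, k i * pts (r i) Cand.a
        = k i + (if pts (r i) Cand.a = 2 then k i else 0) := by
      intro i _
      rcases ha12 i with h | h <;> rw [h] <;> simp <;> omega
    have : Sa = 2 * K + ∑ i ∈ Finset.univ.filter (fun i => pts (r i) Cand.a = 2), k i := by
      rw [hSa_def, Finset.sum_congr rfl key, Finset.sum_add_distrib, hsum,
        Finset.sum_filter]
    omega
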